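/- For σ ∈ S_n let κ_σ be the unique element of I_n such that σ = (n,κ_σ(n))∘(n−1,κ_σ(n−1))∘⋯∘(1,κ_σ(1)), and set σ^{[i]} := (n,κ_σ(n))∘⋯∘(i,κ_σ(i)). Let ᾱ(σ) := ∏_g (n−2u−2+g)⁻¹ ∈ K, the product over all g ∈ {1,…,n} that are not the maximum of their cycle in σ. Then for arbitrary n×n matrices C_1,…,C_n over A, ⟨⟨C_1,…,C_n⟩⟩ = ∑_{σ∈S_n} ᾱ(σ)·P_{σ⁻¹}·C_1^(σ^{[1]}(1))·C_2^(σ^{[2]}(2))⋯C_n^(σ^{[n]}(n)). -/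

import Mathlib

/-!
STATEMENT 11: For σ ∈ S_n let κ_σ ∈ I_n be the unique tuple with
σ = (n,κ_σ(n))∘⋯∘(1,κ_σ(1)), σ^{[i]} := (n,κ_σ(n))∘⋯∘(i,κ_σ(i)), and
ᾱ(σ) := ∏_{g not max of its σ-cycle} (n−2u−2+g)⁻¹. Then
⟨⟨C_1,…,C_n⟩⟩ = ∑_{σ∈S_n} ᾱ(σ)·P_{σ⁻¹}·C_1^(σ^{[1]}(1))⋯C_n^(σ^{[n]}(n)).
κ_σ is formalized as any function `κσ` satisfying its defining property.
The point `i : Fin n` carries the label `i+1 ∈ {1,…,n}`.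
-/

noncomputable section

abbrev K : Type := RatFunc ℚ

def u : K := RatFunc.X

/-- Operators on the n-fold tensor power of K^n with coefficients in A. -/
abbrev Op (A : Type*) (n : ℕ) := Matrix (Fin n → Fin n) (Fin n → Fin n) A

variable {A : Type*} [Ring A] [Algebra K A] {n : ℕ}

/-- `act C s` = C^(s): the matrix C acting on the s-th tensor factor. -/
def act (C : Matrix (Fin n) (Fin n) A) (s : Fin n) : Op A n :=
  fun f g => if ∀ t, t ≠ s → f t = g t then C (f s) (g s) else 0

/-- `Pop σ` = P_σ: permutation of the tensor factors according to σ. -/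
def Pop (σ : Equiv.Perm (Fin n)) : Op A n :=
  fun f g => if f = g ∘ ⇑σ⁻¹ then (1 : A) else 0

/-- P_{ij} (with P_{ii} = Id). -/
def Pij (i j : Fin n) : Op A n := Pop (Equiv.swap i j)

/-- Π_k = 1 − (2u−k−n+2)⁻¹ ∑_{i=k+1}^n P_{ki}, with label k+1. -/
def Piop (k : Fin n) : Op A n :=
  (1 : Op A n) -
    ((2 * u - ((k : ℕ) + 1 : K) - (n : K) + 2)⁻¹ : K) •
      ∑ i ∈ Finset.univ.filter (fun i => k < i), Pij k i

/-- ⟨⟨C_1,…,C_n⟩⟩ = C_1^(1)·Π_1·C_2^(2)·Π_2⋯Π_{n−1}·C_n^(n). -/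
def braket (C : Fin n → Matrix (Fin n) (Fin n) A) : Op A n :=
  ((List.finRange n).map (fun s => act (C s) s * Piop s)).prod

/-- σ^{[i]} for σ with associated tuple κ: (n,κ(n))∘(n−1,κ(n−1))∘⋯∘(i,κ(i)). -/
def qk (κ : Fin n → Fin n) (i : Fin n) : Equiv.Perm (Fin n) :=
  ((((List.finRange n).filter (fun j => decide (i ≤ j))).reverse).map
    (fun j => Equiv.swap j (κ j))).prod

/-- The full product (n,κ(n))∘(n−1,κ(n−1))∘⋯∘(1,κ(1)). -/
def permOf (κ : Fin n → Fin n) : Equiv.Perm (Fin n) :=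
  (((List.finRange n).reverse).map (fun j => Equiv.swap j (κ j))).prod

/-- ᾱ(σ) = ∏ (n−2u−2+g)⁻¹ over all g that are not the maximum of their σ-cycle,
with label g+1. -/
def alphaBar (σ : Equiv.Perm (Fin n)) : K :=
  ∏ g ∈ Finset.univ.filter (fun g => ¬ ∀ j, σ.SameCycle g j → j ≤ g),
    ((n : K) - 2 * u - 2 + ((g : ℕ) + 1 : K))⁻¹

set_option linter.unusedSectionVars false
set_option linter.unusedTactic false
set_option linter.unusedVariables false

lemma filter_finRange_nil {n k : ℕ} (hk : n ≤ k) :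
    (List.finRange n).filter (fun j : Fin n => decide (k ≤ j.val)) = [] := by
  apply List.filter_eq_nil_iff.mpr
  intro j _
  have := j.isLt
  simp only [decide_eq_true_eq]
  omega

lemma filter_finRange_cons {n k : ℕ} (hk : k < n) :
    (List.finRange n).filter (fun j : Fin n => decide (k ≤ j.val))
      = ⟨k, hk⟩ :: (List.finRange n).filter (fun j : Fin n => decide (k + 1 ≤ j.val)) := by
  induction n generalizing k with
  | zero => omega
  | succ n ih =>
    rw [List.finRange_succ]
    cases k with
    | zero =>
      simp [List.filter_cons, List.filter_map, Function.comp_def, List.filter_eq_self]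
    | succ k =>
      have hk' : k < n := by omega
      simp only [List.filter_cons, List.filter_map, Function.comp_def, Fin.val_succ,
        Fin.val_zero]
      have h1 : (fun a : Fin n => decide (k + 1 ≤ a.val + 1)) =
          (fun a : Fin n => decide (k ≤ a.val)) := by
        funext a; simp
      have h2 : (fun a : Fin n => decide (k + 1 + 1 ≤ a.val + 1)) =
          (fun a : Fin n => decide (k + 1 ≤ a.val)) := by
        funext a; simp
      rw [if_neg (by simp), if_neg (by simp), h1, h2, ih hk']
      simp [Fin.succ_mk]
set_option linter.unusedSectionVars false
set_option linter.unusedTactic false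
def tailPerm {n : ℕ} (κ : Fin n → Fin n) (k : ℕ) : Equiv.Perm (Fin n) :=
  ((((List.finRange n).filter (fun j : Fin n => decide (k ≤ j.val))).reverse).map
    (fun j => Equiv.swap j (κ j))).prod

lemma tailPerm_nil {κ : Fin n → Fin n} {k : ℕ} (hk : n ≤ k) : tailPerm κ k = 1 := by
  rw [tailPerm, filter_finRange_nil hk]; rfl

lemma tailPerm_cons {κ : Fin n → Fin n} {k : ℕ} (hk : k < n) :
    tailPerm κ k = tailPerm κ (k + 1) * Equiv.swap ⟨k, hk⟩ (κ ⟨k, hk⟩) := by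
  rw [tailPerm, filter_finRange_cons hk, List.reverse_cons, List.map_append, List.prod_append]
  rfl

lemma tailPerm_congr {κ κ' : Fin n → Fin n} {k : ℕ}
    (h : ∀ j : Fin n, k ≤ j.val → κ j = κ' j) : tailPerm κ k = tailPerm κ' k := by
  unfold tailPerm
  congr 1
  apply List.map_congr_left
  intro j hj
  rw [List.mem_reverse, List.mem_filter] at hj
  rw [h j (by simpa using hj.2)]

lemma tailPerm_fix {κ : Fin n → Fin n} (hκ : ∀ i, i ≤ κ i) :
    ∀ d k, n ≤ k + d → ∀ j : Fin n, j.val < k → tailPerm κ k j = j := by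
  intro d
  induction d with
  | zero => intro k hk j _; rw [tailPerm_nil (by omega)]; rfl
  | succ d ih =>
    intro k hk j hj
    by_cases hkn : k < n
    · rw [tailPerm_cons hkn]
      have h1 : Equiv.swap ⟨k, hkn⟩ (κ ⟨k, hkn⟩) j = j := by
        apply Equiv.swap_apply_of_ne_of_ne
        · exact fun h => by simp [Fin.ext_iff] at h; omega
        · intro h
          have := hκ ⟨k, hkn⟩
          rw [← h, Fin.le_def] at this
          simp only [Fin.val_mk] at this
          omega
      simp only [Equiv.Perm.mul_apply, h1]
      exact ih (k+1) (by omega) j (by omega)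
    · rw [tailPerm_nil (by omega)]; rfl

lemma Pop_one : (Pop 1 : Op A n) = 1 := by
  ext f g
  simp [Pop, Matrix.one_apply, eq_comm]

lemma Pop_mul (σ τ : Equiv.Perm (Fin n)) : (Pop σ * Pop τ : Op A n) = Pop (σ * τ) := by
  ext f g
  simp only [Matrix.mul_apply, Pop]
  rw [Finset.sum_eq_single (g ∘ ⇑τ⁻¹)]
  · simp only [if_pos rfl, mul_one]
    simp [Function.comp_assoc, Equiv.Perm.coe_mul, mul_inv_rev]
  · intro h _ hne
    rw [if_neg hne, mul_zero]
  · intro h; exact absurd (Finset.mem_univ _) h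
lemma Pop_mul_act (C : Matrix (Fin n) (Fin n) A) (s : Fin n) (σ : Equiv.Perm (Fin n)) :
    (Pop σ * act C s : Op A n) = act C (σ s) * Pop σ := by
  ext f g
  simp only [Matrix.mul_apply, Pop]
  rw [Finset.sum_eq_single (f ∘ ⇑σ), Finset.sum_eq_single (g ∘ ⇑σ⁻¹)]
  · rw [if_pos (by funext t; simp), one_mul, if_pos rfl, mul_one]
    simp only [act]
    have hc : (∀ t, t ≠ s → (f ∘ ⇑σ) t = g t) ↔ (∀ t, t ≠ σ s → f t = (g ∘ ⇑σ⁻¹) t) := by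
      constructor
      · intro h t ht
        have := h (σ⁻¹ t) (fun he => ht (by rw [← he]; simp))
        simpa using this
      · intro h t ht
        have := h (σ t) (fun he => ht (σ.injective (by simpa using he)))
        simpa using this
    rw [if_congr hc rfl rfl]
    simp
  · intro h _ hne
    rw [if_neg hne, mul_zero]
  · intro h; exact absurd (Finset.mem_univ _) h
  · intro h _ hne
    rw [if_neg (fun he => hne (by rw [he]; funext t; simp)), zero_mul]
  · intro h; exact absurd (Finset.mem_univ _) h

lemma act_mul_Pop (C : Matrix (Fin n) (Fin n) A) (s : Fin n) (σ : Equiv.Perm (Fin n)) :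
    (act C s * Pop σ : Op A n) = Pop σ * act C (σ⁻¹ s) := by
  have := Pop_mul_act C (σ⁻¹ s) σ
  rw [show σ (σ⁻¹ s) = s from σ.apply_symm_apply s] at this
  rw [this]

def dcoef (n : ℕ) (k j : Fin n) : K :=
  if j = k then 1 else ((n : K) - 2 * u - 2 + ((k : ℕ) + 1 : K))⁻¹

lemma Piop_eq (k : Fin n) :
    (Piop k : Op A n) =
      ∑ j ∈ Finset.univ.filter (fun j => k ≤ j), dcoef n k j • Pij k j := by
  have hsplit : Finset.univ.filter (fun j => k ≤ j) =
      insert k (Finset.univ.filter (fun j => k < j)) := by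
    ext j
    simp [le_iff_lt_or_eq, or_comm, eq_comm]
  rw [hsplit, Finset.sum_insert (by simp)]
  have h1 : (dcoef n k k • Pij k k : Op A n) = 1 := by
    rw [dcoef, if_pos rfl, one_smul, Pij, Equiv.swap_self]
    exact Pop_one
  rw [h1]
  have h2 : ∀ j ∈ Finset.univ.filter (fun j => k < j),
      (dcoef n k j • Pij k j : Op A n) =
        ((n : K) - 2 * u - 2 + ((k : ℕ) + 1 : K))⁻¹ • Pij k j := by
    intro j hj
    rw [Finset.mem_filter] at hj
    rw [dcoef, if_neg (by exact fun he => absurd hj.2 (by simp [he]))]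
  rw [Finset.sum_congr rfl h2, ← Finset.smul_sum, Piop, sub_eq_add_neg, ← neg_smul]
  congr 2
  rw [← inv_neg]
  congr 1
  ring
def Iset (n k : ℕ) : Finset (Fin n → Fin n) :=
  Finset.univ.filter (fun κ => (∀ i, i ≤ κ i) ∧ ∀ i : Fin n, i.val < k → κ i = i)

def coeff (n : ℕ) (κ : Fin n → Fin n) : K :=
  ∏ g ∈ Finset.univ.filter (fun g => κ g ≠ g), ((n : K) - 2 * u - 2 + ((g : ℕ) + 1 : K))⁻¹

def Tprod (C : Fin n → Matrix (Fin n) (Fin n) A) (κ : Fin n → Fin n) (k : ℕ) : Op A n :=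
  (((List.finRange n).filter (fun j : Fin n => decide (k ≤ j.val))).map
    (fun s => act (C s) (tailPerm κ s.val s))).prod

lemma Tprod_nil (C : Fin n → Matrix (Fin n) (Fin n) A) (κ : Fin n → Fin n) {k : ℕ}
    (hk : n ≤ k) : Tprod C κ k = 1 := by
  rw [Tprod, filter_finRange_nil hk]; rfl

lemma Tprod_cons (C : Fin n → Matrix (Fin n) (Fin n) A) (κ : Fin n → Fin n) {k : ℕ}
    (hk : k < n) :
    Tprod C κ k = act (C ⟨k, hk⟩) (tailPerm κ k ⟨k, hk⟩) * Tprod C κ (k + 1) := by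
  rw [Tprod, filter_finRange_cons hk, List.map_cons, List.prod_cons]; rfl

lemma Iset_nil {k : ℕ} (hk : n ≤ k) : Iset n k = {fun i => i} := by
  ext κ
  simp only [Iset, Finset.mem_filter, Finset.mem_univ, true_and, Finset.mem_singleton]
  constructor
  · rintro ⟨-, h2⟩
    funext i
    exact h2 i (lt_of_lt_of_le i.isLt hk)
  · rintro rfl
    exact ⟨fun i => le_refl i, fun i _ => rfl⟩

lemma coeff_id : coeff n (fun i => i) = 1 := by
  rw [coeff]
  convert Finset.prod_empty
  simp

lemma key_nil (C : Fin n → Matrix (Fin n) (Fin n) A) {k : ℕ} (hk : n ≤ k) :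
    ∑ κ ∈ Iset n k, coeff n κ • (Pop (tailPerm κ k)⁻¹ * Tprod C κ k) = (1 : Op A n) := by
  rw [Iset_nil hk, Finset.sum_singleton, coeff_id, one_smul, tailPerm_nil hk, inv_one,
    Pop_one, Tprod_nil C _ hk, one_mul]
lemma tailPerm_update_high {κ : Fin n → Fin n} {k : ℕ} (hkn : k < n) (j : Fin n) {m : ℕ}
    (hm : k < m) : tailPerm (Function.update κ ⟨k, hkn⟩ j) m = tailPerm κ m := by
  apply tailPerm_congr
  intro i hi
  apply Function.update_of_ne
  intro he
  rw [he] at hi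
  simp only [Fin.val_mk] at hi
  omega

lemma Tprod_update_high (C : Fin n → Matrix (Fin n) (Fin n) A) {κ : Fin n → Fin n} {k : ℕ}
    (hkn : k < n) (j : Fin n) :
    Tprod C (Function.update κ ⟨k, hkn⟩ j) (k + 1) = Tprod C κ (k + 1) := by
  rw [Tprod, Tprod]
  congr 1
  apply List.map_congr_left
  intro s hs
  rw [List.mem_filter] at hs
  have hs2 : k + 1 ≤ s.val := by simpa using hs.2
  rw [tailPerm_update_high hkn j (by omega)]

lemma coeff_update {κ : Fin n → Fin n} {k : ℕ} (hkn : k < n) (hκ : κ ⟨k, hkn⟩ = ⟨k, hkn⟩)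
    (j : Fin n) :
    coeff n (Function.update κ ⟨k, hkn⟩ j) = dcoef n ⟨k, hkn⟩ j * coeff n κ := by
  by_cases hj : j = ⟨k, hkn⟩
  · subst hj
    rw [dcoef, if_pos rfl, one_mul]
    have : Function.update κ ⟨k, hkn⟩ (⟨k, hkn⟩ : Fin n) = κ := by
      funext i
      by_cases hik : i = (⟨k, hkn⟩ : Fin n)
      · subst hik; rw [Function.update_self, hκ]
      · rw [Function.update_of_ne hik]
    rw [this]
  · rw [coeff, coeff, dcoef, if_neg hj]
    have hset : Finset.univ.filter (fun g => Function.update κ ⟨k, hkn⟩ j g ≠ g)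
        = insert (⟨k, hkn⟩ : Fin n) (Finset.univ.filter (fun g => κ g ≠ g)) := by
      ext g
      by_cases hg : g = (⟨k, hkn⟩ : Fin n)
      · subst hg
        simp [Function.update_self, hj, hκ]
      · simp [Function.update_of_ne hg, hg]
    rw [hset, Finset.prod_insert (by simp [hκ])]

lemma key (C : Fin n → Matrix (Fin n) (Fin n) A) :
    ∀ d k, n ≤ k + d →
    (((List.finRange n).filter (fun j : Fin n => decide (k ≤ j.val))).map
        (fun s => act (C s) s * Piop s)).prod
      = ∑ κ ∈ Iset n k, coeff n κ • (Pop (tailPerm κ k)⁻¹ * Tprod C κ k) := by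
  intro d
  induction d with
  | zero =>
    intro k hk
    rw [filter_finRange_nil (show n ≤ k by omega), key_nil C (show n ≤ k by omega),
      List.map_nil, List.prod_nil]
  | succ d ih =>
    intro k hk
    by_cases hkn : k < n
    case neg =>
      rw [filter_finRange_nil (by omega), key_nil C (by omega), List.map_nil, List.prod_nil]
    case pos =>
    rw [filter_finRange_cons hkn, List.map_cons, List.prod_cons, ih (k + 1) (by omega), Piop_eq]
    simp only [Finset.mul_sum, Finset.sum_mul]
    rw [← Finset.sum_product']
    apply Finset.sum_nbij' (i := fun p => Function.update p.1 ⟨k, hkn⟩ p.2)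
      (j := fun κ' => (Function.update κ' ⟨k, hkn⟩ ⟨k, hkn⟩, κ' ⟨k, hkn⟩))
    · -- hi : membership
      intro p hp
      obtain ⟨hp2, hp1⟩ := Finset.mem_product.mp hp
      rw [Finset.mem_filter] at hp1
      simp only [Iset, Finset.mem_filter, Finset.mem_univ, true_and] at hp2 ⊢
      refine ⟨fun i => ?_, fun i hi => ?_⟩
      · by_cases hik : i = (⟨k, hkn⟩ : Fin n)
        · subst hik
          rw [Function.update_self]
          exact hp1.2
        · rw [Function.update_of_ne hik]
          exact hp2.1 i
      · have hik : i ≠ (⟨k, hkn⟩ : Fin n) := by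
          intro he
          rw [he] at hi
          simp at hi
        rw [Function.update_of_ne hik]
        exact hp2.2 i (by omega)
    · -- hj : membership
      intro κ' h
      simp only [Iset, Finset.mem_filter, Finset.mem_univ, true_and] at h
      rw [Finset.mem_product]
      refine ⟨?_, Finset.mem_filter.mpr ⟨Finset.mem_univ _, h.1 _⟩⟩
      simp only [Iset, Finset.mem_filter, Finset.mem_univ, true_and]
      refine ⟨fun i => ?_, fun i hi => ?_⟩
      · by_cases hik : i = (⟨k, hkn⟩ : Fin n)
        · subst hik
          rw [Function.update_self]
        · rw [Function.update_of_ne hik]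
          exact h.1 i
      · by_cases hik : i = (⟨k, hkn⟩ : Fin n)
        · subst hik
          rw [Function.update_self]
        · rw [Function.update_of_ne hik]
          have : i.val ≠ k := fun hv => hik (Fin.ext hv)
          exact h.2 i (by omega)
    · -- left_inv
      intro p hp
      obtain ⟨hp2, hp1⟩ := Finset.mem_product.mp hp
      simp only [Iset, Finset.mem_filter, Finset.mem_univ, true_and] at hp2
      have h2 : p.1 ⟨k, hkn⟩ = ⟨k, hkn⟩ := hp2.2 _ (Nat.lt_succ_self k)
      have e1 : Function.update p.1 (⟨k, hkn⟩ : Fin n) p.2 ⟨k, hkn⟩ = p.2 :=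
        Function.update_self _ _ _
      have e2 : Function.update (Function.update p.1 (⟨k, hkn⟩ : Fin n) p.2) ⟨k, hkn⟩
          (⟨k, hkn⟩ : Fin n) = p.1 := by
        funext i
        by_cases hik : i = (⟨k, hkn⟩ : Fin n)
        · subst hik; rw [Function.update_self, h2]
        · rw [Function.update_of_ne hik, Function.update_of_ne hik]
      rw [e1, e2]
    · -- right_inv
      intro κ' h
      simp only [Iset, Finset.mem_filter, Finset.mem_univ, true_and] at h
      rw [Function.update_idem]
      exact Function.update_eq_self _ _
    · -- term equality
      intro p hp
      obtain ⟨hp2, hp1⟩ := Finset.mem_product.mp hp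
      rw [Finset.mem_filter] at hp1
      simp only [Iset, Finset.mem_filter, Finset.mem_univ, true_and] at hp2
      obtain ⟨κ, j⟩ := p
      simp only at hp1 hp2 ⊢
      have hκkf : κ ⟨k, hkn⟩ = ⟨k, hkn⟩ := hp2.2 _ (Nat.lt_succ_self k)
      have e1 : tailPerm (Function.update κ ⟨k, hkn⟩ j) (k + 1) = tailPerm κ (k + 1) :=
        tailPerm_update_high hkn j (Nat.lt_succ_self k)
      have e2 : tailPerm (Function.update κ ⟨k, hkn⟩ j) k
          = tailPerm κ (k + 1) * Equiv.swap ⟨k, hkn⟩ j := by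
        rw [tailPerm_cons hkn, e1, Function.update_self]
      have e3 : Tprod C (Function.update κ ⟨k, hkn⟩ j) k
          = act (C ⟨k, hkn⟩) (tailPerm (Function.update κ ⟨k, hkn⟩ j) k ⟨k, hkn⟩)
              * Tprod C κ (k + 1) := by
        rw [Tprod_cons C _ hkn, Tprod_update_high C hkn j]
      have m1 : (Pij (⟨k, hkn⟩ : Fin n) j : Op A n) * Pop (tailPerm κ (k + 1))⁻¹
          = Pop (tailPerm (Function.update κ ⟨k, hkn⟩ j) k)⁻¹ := by
        rw [Pij, Pop_mul, e2, mul_inv_rev, Equiv.swap_inv]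
      have m2 : (act (C ⟨k, hkn⟩) ⟨k, hkn⟩ : Op A n)
            * Pop (tailPerm (Function.update κ ⟨k, hkn⟩ j) k)⁻¹
          = Pop (tailPerm (Function.update κ ⟨k, hkn⟩ j) k)⁻¹
            * act (C ⟨k, hkn⟩) (tailPerm (Function.update κ ⟨k, hkn⟩ j) k ⟨k, hkn⟩) := by
        rw [act_mul_Pop, inv_inv]
      calc act (C ⟨k, hkn⟩) ⟨k, hkn⟩ * (dcoef n ⟨k, hkn⟩ j • Pij ⟨k, hkn⟩ j)
            * (coeff n κ • (Pop (tailPerm κ (k + 1))⁻¹ * Tprod C κ (k + 1)))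
          = (coeff n κ * dcoef n ⟨k, hkn⟩ j) • (act (C ⟨k, hkn⟩) ⟨k, hkn⟩ * Pij ⟨k, hkn⟩ j
              * (Pop (tailPerm κ (k + 1))⁻¹ * Tprod C κ (k + 1))) := by
            simp only [mul_smul_comm, smul_mul_assoc, smul_smul]
        _ = coeff n (Function.update κ ⟨k, hkn⟩ j)
              • (Pop (tailPerm (Function.update κ ⟨k, hkn⟩ j) k)⁻¹
                  * Tprod C (Function.update κ ⟨k, hkn⟩ j) k) := by
            rw [coeff_update hkn hκkf j, mul_comm]
            congr 1
            rw [mul_assoc (act (C ⟨k, hkn⟩) ⟨k, hkn⟩),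
              ← mul_assoc (Pij (⟨k, hkn⟩ : Fin n) j), m1, ← mul_assoc, m2, mul_assoc, ← e3]
lemma sc_pow (σ : Equiv.Perm (Fin n)) (a : Fin n) (i : ℕ) : σ.SameCycle a ((σ ^ i) a) :=
  ⟨(i : ℤ), by rw [zpow_natCast]⟩

lemma sc_fix {σ : Equiv.Perm (Fin n)} {a b : Fin n} (ha : σ a = a) (h : σ.SameCycle a b) :
    b = a := by
  obtain ⟨i, hi⟩ := h
  rw [← hi]
  exact (Function.IsFixedPt.perm_zpow ha i)

section swapfacts

variable {σ : Equiv.Perm (Fin n)} {kf w : Fin n}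

lemma sp1 (hfix : σ kf = kf) (hm : w ≠ kf) {a : Fin n} (ha : a ≠ kf) (ham : a ≠ w) :
    (σ * Equiv.swap kf w) a = σ a := by
  simp [Equiv.Perm.mul_apply, Equiv.swap_apply_of_ne_of_ne ha ham]

lemma sp2 (hfix : σ kf = kf) : (σ * Equiv.swap kf w) w = kf := by
  simp [Equiv.Perm.mul_apply, Equiv.swap_apply_right, hfix]

lemma sp3 : (σ * Equiv.swap kf w) kf = σ w := by
  simp [Equiv.Perm.mul_apply, Equiv.swap_apply_left]

lemma ne_kf_of_ne {a : Fin n} (hfix : σ kf = kf) (ha : a ≠ kf) : σ a ≠ kf := by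
  intro h
  exact ha (σ.injective (h.trans hfix.symm))

lemma core1 (hfix : σ kf = kf) (hm : w ≠ kf) :
    ∀ i : ℕ, ∀ a b : Fin n, a ≠ kf → b ≠ kf → ((σ * Equiv.swap kf w) ^ i) a = b →
      σ.SameCycle a b := by
  intro i
  induction i using Nat.strong_induction_on with
  | _ i ih =>
    match i with
    | 0 =>
      intro a b _ _ h
      rw [pow_zero] at h
      simp only [Equiv.Perm.one_apply] at h
      rw [← h]
    | 1 =>
      intro a b ha hb h
      rw [pow_one] at h
      by_cases ham : a = w
      · subst ham
        rw [sp2 hfix] at h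
        exact absurd h.symm hb
      · rw [sp1 hfix hm ha ham] at h
        rw [← h]
        exact sc_pow σ a 1
    | (i + 2) =>
      intro a b ha hb h
      by_cases ham : a = w
      · have h1 : ((σ * Equiv.swap kf w) ^ (i + 2)) a
            = ((σ * Equiv.swap kf w) ^ i) (σ w) := by
          rw [pow_succ, pow_succ, Equiv.Perm.mul_apply, Equiv.Perm.mul_apply, ham,
            sp2 hfix, sp3]
        rw [h1] at h
        have hsw : σ w ≠ kf := ne_kf_of_ne hfix hm
        have h2 := ih i (by omega) (σ w) b hsw hb h
        have h3 : σ.SameCycle a (σ w) := by rw [ham]; exact sc_pow σ w 1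
        exact h3.trans h2
      · have h1 : ((σ * Equiv.swap kf w) ^ (i + 2)) a
            = ((σ * Equiv.swap kf w) ^ (i + 1)) (σ a) := by
          rw [pow_succ, Equiv.Perm.mul_apply, sp1 hfix hm ha ham]
        rw [h1] at h
        have hsa : σ a ≠ kf := ne_kf_of_ne hfix ha
        have h2 := ih (i + 1) (by omega) (σ a) b hsa hb h
        exact (sc_pow σ a 1).trans h2

lemma core2 (hfix : σ kf = kf) (hm : w ≠ kf) :
    ∀ i : ℕ, ∀ a b : Fin n, a ≠ kf → (σ ^ i) a = b →
      (σ * Equiv.swap kf w).SameCycle a b := by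
  intro i
  induction i with
  | zero =>
    intro a b _ h
    rw [pow_zero] at h
    simp only [Equiv.Perm.one_apply] at h
    rw [← h]
  | succ i ih =>
    intro a b ha h
    have h1 : (σ ^ (i + 1)) a = (σ ^ i) (σ a) := by
      rw [pow_succ, Equiv.Perm.mul_apply]
    rw [h1] at h
    have hsa : σ a ≠ kf := ne_kf_of_ne hfix ha
    have step : (σ * Equiv.swap kf w).SameCycle a (σ a) := by
      by_cases ham : a = w
      · have h2 : ((σ * Equiv.swap kf w) ^ 2) a = σ a := by
          rw [pow_two, Equiv.Perm.mul_apply, ham, sp2 hfix, sp3]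
        rw [← h2]
        exact sc_pow _ a 2
      · have : (σ * Equiv.swap kf w) a = σ a := sp1 hfix hm ha ham
        rw [← this]
        exact sc_pow _ a 1
    exact step.trans (ih (σ a) b hsa h)

lemma fact1 (hfix : σ kf = kf) (hm : w ≠ kf) {a b : Fin n} (ha : a ≠ kf) (hb : b ≠ kf) :
    (σ * Equiv.swap kf w).SameCycle a b ↔ σ.SameCycle a b := by
  constructor
  · intro h
    obtain ⟨i, -, hi⟩ := h.exists_pow_eq'
    exact core1 hfix hm i a b ha hb hi
  · intro h
    obtain ⟨i, -, hi⟩ := h.exists_pow_eq'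
    exact core2 hfix hm i a b ha hi

lemma fact2 (hfix : σ kf = kf) (hm : w ≠ kf) (b : Fin n) :
    (σ * Equiv.swap kf w).SameCycle kf b ↔ b = kf ∨ σ.SameCycle w b := by
  constructor
  · intro h
    by_cases hb : b = kf
    · exact Or.inl hb
    obtain ⟨i, -, hi⟩ := h.exists_pow_eq'
    match i with
    | 0 => exact Or.inl hi.symm
    | (i + 1) =>
      right
      have h1 : ((σ * Equiv.swap kf w) ^ (i + 1)) kf
          = ((σ * Equiv.swap kf w) ^ i) (σ w) := by
        rw [pow_succ, Equiv.Perm.mul_apply, sp3]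
      rw [h1] at hi
      have hsm : σ w ≠ kf := ne_kf_of_ne hfix hm
      exact (sc_pow σ w 1).trans (by simpa using core1 hfix hm i (σ w) b hsm hb hi)
  · rintro (rfl | h)
    · exact Equiv.Perm.SameCycle.refl _ _
    · have h1 : (σ * Equiv.swap kf w).SameCycle kf w := by
        refine Equiv.Perm.SameCycle.symm ⟨(1 : ℤ), ?_⟩
        simpa using sp2 (w := w) hfix
      refine h1.trans ?_
      obtain ⟨i, -, hi⟩ := h.exists_pow_eq'
      exact core2 hfix hm i w b hm hi

end swapfacts
def maxc (σ : Equiv.Perm (Fin n)) (g : Fin n) : Prop := ∀ j, σ.SameCycle g j → j ≤ g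

lemma maxc_one (g : Fin n) : maxc (1 : Equiv.Perm (Fin n)) g := by
  intro j hj
  have : j = g := sc_fix rfl hj
  exact le_of_eq this

lemma maxc_main {κ : Fin n → Fin n} (hκ : ∀ i, i ≤ κ i) :
    ∀ d k, n ≤ k + d → ∀ g : Fin n, (maxc (tailPerm κ k) g ↔ (g.val < k ∨ κ g = g)) := by
  intro d
  induction d with
  | zero =>
    intro k hk g
    rw [tailPerm_nil (by omega)]
    exact ⟨fun _ => Or.inl (by omega), fun _ => maxc_one g⟩
  | succ d ih =>
    intro k hk g
    by_cases hkn : k < n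
    case neg =>
      rw [tailPerm_nil (by omega)]
      have : g.val < k := by have := g.isLt; omega
      exact ⟨fun _ => Or.inl this, fun _ => maxc_one g⟩
    case pos =>
    have hrec : tailPerm κ k = tailPerm κ (k + 1) * Equiv.swap ⟨k, hkn⟩ (κ ⟨k, hkn⟩) :=
      tailPerm_cons hkn
    have hfix : tailPerm κ (k + 1) ⟨k, hkn⟩ = ⟨k, hkn⟩ :=
      tailPerm_fix hκ d (k + 1) (by omega) _ (by simp)
    by_cases hcase : κ ⟨k, hkn⟩ = ⟨k, hkn⟩
    · have hone : tailPerm κ k = tailPerm κ (k + 1) := by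
        rw [hrec, hcase, Equiv.swap_self]
        exact mul_one _
      rw [hone, ih (k + 1) (by omega) g]
      constructor
      · rintro (h | h)
        · by_cases hgk : g.val = k
          · right
            have hgg : g = ⟨k, hkn⟩ := Fin.ext hgk
            rw [hgg]
            exact hcase
          · left; omega
        · right; exact h
      · rintro (h | h)
        · left; omega
        · right; exact h
    · have hlt : (⟨k, hkn⟩ : Fin n) < κ ⟨k, hkn⟩ :=
        lt_of_le_of_ne (hκ _) (Ne.symm hcase)
      have hwk : κ ⟨k, hkn⟩ ≠ ⟨k, hkn⟩ := hcase
      by_cases hg : g = (⟨k, hkn⟩ : Fin n)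
      · constructor
        · intro hmax
          exfalso
          have h1 : (tailPerm κ k).SameCycle g (κ ⟨k, hkn⟩) := by
            rw [hrec, hg]
            exact (fact2 hfix hwk (κ ⟨k, hkn⟩)).mpr (Or.inr (Equiv.Perm.SameCycle.refl _ _))
          have := hmax _ h1
          rw [hg] at this
          exact absurd this (not_le.mpr hlt)
        · rintro (h | h)
          · rw [hg] at h
            simp at h
          · rw [hg] at h
            exact absurd h hcase
      · have hiff : maxc (tailPerm κ k) g ↔ maxc (tailPerm κ (k + 1)) g := by
          constructor
          · intro hmax j hj
            by_cases hjk : j = (⟨k, hkn⟩ : Fin n)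
            · exfalso
              rw [hjk] at hj
              exact hg (sc_fix hfix hj.symm)
            · exact hmax j (by rw [hrec]; exact (fact1 hfix hwk hg hjk).mpr hj)
          · intro hmax j hj
            rw [hrec] at hj
            by_cases hjk : j = (⟨k, hkn⟩ : Fin n)
            · rw [hjk] at hj ⊢
              rcases (fact2 hfix hwk g).mp hj.symm with h2 | h2
              · exact absurd h2 hg
              · exact le_trans (le_of_lt hlt) (hmax _ h2.symm)
            · exact hmax j ((fact1 hfix hwk hg hjk).mp hj)
        rw [hiff, ih (k + 1) (by omega) g]
        have hgk : g.val ≠ k := fun h => hg (Fin.ext h)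
        constructor
        · rintro (h | h)
          · left; omega
          · right; exact h
        · rintro (h | h)
          · left; omega
          · right; exact h

lemma tailPerm_inj {κ κ' : Fin n → Fin n} (hκ : ∀ i, i ≤ κ i) (hκ' : ∀ i, i ≤ κ' i) :
    ∀ d k, n ≤ k + d → tailPerm κ k = tailPerm κ' k →
      ∀ j : Fin n, k ≤ j.val → κ j = κ' j := by
  intro d
  induction d with
  | zero =>
    intro k hk _ j hj
    have := j.isLt
    omega
  | succ d ih =>
    intro k hk heq j hj
    by_cases hkn : k < n
    · have hfix : tailPerm κ (k + 1) ⟨k, hkn⟩ = ⟨k, hkn⟩ :=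
        tailPerm_fix hκ d (k + 1) (by omega) _ (by simp)
      have hfix' : tailPerm κ' (k + 1) ⟨k, hkn⟩ = ⟨k, hkn⟩ :=
        tailPerm_fix hκ' d (k + 1) (by omega) _ (by simp)
      have hv : (tailPerm κ k)⁻¹ ⟨k, hkn⟩ = κ ⟨k, hkn⟩ := by
        rw [tailPerm_cons hkn, mul_inv_rev, Equiv.Perm.mul_apply]
        have : (tailPerm κ (k + 1))⁻¹ ⟨k, hkn⟩ = ⟨k, hkn⟩ := by
          rw [Equiv.Perm.inv_eq_iff_eq, hfix]
        rw [this, Equiv.swap_inv, Equiv.swap_apply_left]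
      have hv' : (tailPerm κ' k)⁻¹ ⟨k, hkn⟩ = κ' ⟨k, hkn⟩ := by
        rw [tailPerm_cons hkn, mul_inv_rev, Equiv.Perm.mul_apply]
        have : (tailPerm κ' (k + 1))⁻¹ ⟨k, hkn⟩ = ⟨k, hkn⟩ := by
          rw [Equiv.Perm.inv_eq_iff_eq, hfix']
        rw [this, Equiv.swap_inv, Equiv.swap_apply_left]
      have hkk : κ ⟨k, hkn⟩ = κ' ⟨k, hkn⟩ := by
        rw [← hv, ← hv', heq]
      have heq2 : tailPerm κ (k + 1) = tailPerm κ' (k + 1) := by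
        calc tailPerm κ (k + 1)
            = tailPerm κ k * (Equiv.swap ⟨k, hkn⟩ (κ ⟨k, hkn⟩))⁻¹ := by
              rw [tailPerm_cons hkn, mul_inv_cancel_right]
          _ = tailPerm κ' k * (Equiv.swap ⟨k, hkn⟩ (κ' ⟨k, hkn⟩))⁻¹ := by rw [heq, hkk]
          _ = tailPerm κ' (k + 1) := by
              rw [tailPerm_cons hkn, mul_inv_cancel_right]
      by_cases hjk : j.val = k
      · have : j = ⟨k, hkn⟩ := Fin.ext hjk
        rw [this]
        exact hkk
      · exact ih (k + 1) (by omega) heq2 j (by omega)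
    · have := j.isLt
      omega

lemma tailPerm_zero_eq_permOf (κ : Fin n → Fin n) : tailPerm κ 0 = permOf κ := by
  rw [tailPerm, permOf]
  have : (List.finRange n).filter (fun j : Fin n => decide (0 ≤ j.val)) = List.finRange n :=
    List.filter_eq_self.mpr (fun a _ => by simp)
  rw [this]

lemma qk_eq (κ : Fin n → Fin n) (i : Fin n) : qk κ i = tailPerm κ i.val := by
  rw [qk, tailPerm]
  have : (List.finRange n).filter (fun j : Fin n => decide (i ≤ j))
      = (List.finRange n).filter (fun j : Fin n => decide (i.val ≤ j.val)) := by
    apply List.filter_congr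
    intro x _
    exact decide_eq_decide.mpr Fin.le_def
  rw [this]

lemma coeff_eq_alphaBar {κ : Fin n → Fin n} (hκ : ∀ i, i ≤ κ i) :
    coeff n κ = alphaBar (tailPerm κ 0) := by
  rw [coeff, alphaBar]
  apply Finset.prod_congr _ (fun _ _ => rfl)
  ext g
  simp only [Finset.mem_filter, Finset.mem_univ, true_and]
  have h1 := maxc_main hκ n 0 (by omega) g
  have h2 : (∀ j, (tailPerm κ 0).SameCycle g j → j ≤ g) ↔ κ g = g := by
    constructor
    · intro h
      rcases h1.mp h with h' | h'
      · omega
      · exact h'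
    · intro h
      exact h1.mpr (Or.inr h)
  exact (not_congr h2).symm
lemma kappa_eq (κσ : Equiv.Perm (Fin n) → (Fin n → Fin n))
    (hκσ : ∀ σ : Equiv.Perm (Fin n), (∀ i, i ≤ κσ σ i) ∧ σ = permOf (κσ σ))
    {κ : Fin n → Fin n} (hκ1 : ∀ i, i ≤ κ i) : κσ (tailPerm κ 0) = κ := by
  funext j
  refine tailPerm_inj (hκσ (tailPerm κ 0)).1 hκ1 n 0 (by omega) ?_ j (by omega)
  rw [tailPerm_zero_eq_permOf (κσ _)]
  exact ((hκσ (tailPerm κ 0)).2).symm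

lemma Tprod_zero (C : Fin n → Matrix (Fin n) (Fin n) A) (κ : Fin n → Fin n) :
    Tprod C κ 0 = ((List.finRange n).map (fun s => act (C s) (qk κ s s))).prod := by
  rw [Tprod]
  have hfr : (List.finRange n).filter (fun j : Fin n => decide (0 ≤ j.val)) = List.finRange n :=
    List.filter_eq_self.mpr (fun a _ => by simp)
  rw [hfr]
  apply congrArg
  apply List.map_congr_left
  intro s _
  rw [qk_eq]

theorem braket_eq_sum_perm (hn : 1 ≤ n) (C : Fin n → Matrix (Fin n) (Fin n) A)
    (κσ : Equiv.Perm (Fin n) → (Fin n → Fin n))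
    (hκσ : ∀ σ : Equiv.Perm (Fin n), (∀ i, i ≤ κσ σ i) ∧ σ = permOf (κσ σ)) :
    braket C =
      ∑ σ : Equiv.Perm (Fin n), alphaBar σ •
        (Pop σ⁻¹ *
          ((List.finRange n).map (fun s => act (C s) (qk (κσ σ) s s))).prod) := by
  have hfr : List.finRange n = (List.finRange n).filter (fun j : Fin n => decide (0 ≤ j.val)) :=
    (List.filter_eq_self.mpr (fun a _ => by simp)).symm
  rw [braket, hfr, key C n 0 (by omega)]
  refine Finset.sum_nbij' (i := fun κ => tailPerm κ 0) (j := fun σ => κσ σ)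
    ?_ ?_ ?_ ?_ ?_
  · intro κ _
    exact Finset.mem_univ _
  · intro σ _
    simp only [Iset, Finset.mem_filter, Finset.mem_univ, true_and]
    exact ⟨(hκσ σ).1, fun i hi => absurd hi (by omega)⟩
  · intro κ hκmem
    simp only [Iset, Finset.mem_filter, Finset.mem_univ, true_and] at hκmem
    exact kappa_eq κσ hκσ hκmem.1
  · intro σ _
    show tailPerm (κσ σ) 0 = σ
    rw [tailPerm_zero_eq_permOf]
    exact ((hκσ σ).2).symm
  · intro κ hκmem
    simp only [Iset, Finset.mem_filter, Finset.mem_univ, true_and] at hκmem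
    rw [kappa_eq κσ hκσ hκmem.1, coeff_eq_alphaBar hκmem.1, Tprod_zero, ← hfr]

end
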